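/- Let H be a real Hilbert space, C ⊆ H nonempty closed convex, α > 0, and A : C → H α-inverse-strongly monotone. Let u ∈ SOL(C,A), x ∈ C, τ > 0, and assume ‖A x‖ ≤ ‖A x − A u‖. If y ∈ C satisfies ⟨(x − τ A x) − y, w − y⟩ ≤ 0 for all w ∈ C (i.e., y is the metric projection of x − τ A x onto C), then ‖u − y‖² ≤ ‖u − x‖² + 2τ(2τ − α)‖A x − A u‖². In particular, if 0 < τ < α/2 then ‖u − y‖ ≤ ‖u − x‖. -/
import Mathlib


open scoped InnerProductSpace

/-- In a real Hilbert space, let `A : C → H` be `α`-inverse-strongly monotone,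
`u ∈ SOL(C,A)`, `x ∈ C`, `τ > 0` with `‖A x − A u‖`, and let `y` be the
metric projection of `x − τ A x` onto `C`. Then
`‖u − y‖² ≤ ‖u − x‖² + 2τ(2τ − α)‖A x − A u‖²`; in particular, if `τ < α/2` then
`‖u − y‖ ≤ ‖u − x‖`. -/
theorem projection_step_estimate
    {H : Type*} [NormedAddCommGroup H] [InnerProductSpace ℝ H] [CompleteSpace H]
    (C : Set H) (hCne : C.Nonempty) (hCcl : IsClosed C) (hCcv : Convex ℝ C)
    (A : H → H) (α : ℝ) (hα : 0 < α)
    (hA : ∀ x ∈ C, ∀ y ∈ C, α * ‖A x - A y‖ ^ 2 ≤ ⟪A x - A y, x - y⟫_ℝ)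
    (u : H) (hu : u ∈ C) (hsol : ∀ w ∈ C, 0 ≤ ⟪A u, w - u⟫_ℝ)
    (x : H) (hx : x ∈ C) (τ : ℝ) (hτ : 0 < τ)
    (hbound : ‖A x‖ ≤ ‖A x - A u‖)
    (y : H) (hy : y ∈ C) (hproj : ∀ w ∈ C, ⟪(x - τ • A x) - y, w - y⟫_ℝ ≤ 0) :
    ‖u - y‖ ^ 2 ≤ ‖u - x‖ ^ 2 + 2 * τ * (2 * τ - α) * ‖A x - A u‖ ^ 2 ∧
    (τ < α / 2 → ‖u - y‖ ≤ ‖u - x‖) := by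
  set z := x - τ • A x with hz
  have hp : ⟪z - y, u - y⟫_ℝ ≤ 0 := hproj u hu
  -- ‖u - y‖² ≤ ‖u - z‖²
  have h1 : ‖u - y‖ ^ 2 ≤ ‖u - z‖ ^ 2 := by
    have e : u - z = (u - y) - (z - y) := by abel
    have hexp := norm_sub_sq_real (u - y) (z - y)
    have hzy : (0:ℝ) ≤ ‖z - y‖ ^ 2 := by positivity
    have hc : ⟪u - y, z - y⟫_ℝ = ⟪z - y, u - y⟫_ℝ := real_inner_comm _ _
    rw [e]
    nlinarith
  -- expand ‖u - z‖²
  have h2 : ‖u - z‖ ^ 2 = ‖u - x‖ ^ 2 + 2 * τ * ⟪u - x, A x⟫_ℝ + τ ^ 2 * ‖A x‖ ^ 2 := by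
    have e : u - z = (u - x) + τ • A x := by rw [hz]; abel
    rw [e, norm_add_sq_real, inner_smul_right, norm_smul, Real.norm_eq_abs]
    rw [mul_pow, sq_abs]
    ring
  have hmon := hA x hx u hu
  have hsx := hsol x hx
  -- ⟪u - x, A x⟫ = -(⟪A x - A u, x - u⟫ + ⟪A u, x - u⟫)
  have h3 : ⟪u - x, A x⟫_ℝ = -(⟪A x - A u, x - u⟫_ℝ + ⟪A u, x - u⟫_ℝ) := by
    simp only [inner_sub_left, inner_sub_right, real_inner_comm u (A x),
      real_inner_comm x (A x)]
    ring
  have hb2 : ‖A x‖ ^ 2 ≤ ‖A x - A u‖ ^ 2 := by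
    have h0 : (0:ℝ) ≤ ‖A x‖ := norm_nonneg _
    nlinarith
  have hmain : ‖u - y‖ ^ 2 ≤ ‖u - x‖ ^ 2 + 2 * τ * (2 * τ - α) * ‖A x - A u‖ ^ 2 := by
    have hsq : (0:ℝ) ≤ ‖A x - A u‖ ^ 2 := by positivity
    nlinarith [sq_nonneg τ, mul_pos hτ hτ]
  refine ⟨hmain, fun hlt => ?_⟩
  have hneg : 2 * τ * (2 * τ - α) * ‖A x - A u‖ ^ 2 ≤ 0 := by
    have hsq : (0:ℝ) ≤ ‖A x - A u‖ ^ 2 := by positivity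
    have hpos : 0 ≤ 2 * τ * (α - 2 * τ) * ‖A x - A u‖ ^ 2 :=
      mul_nonneg (mul_nonneg (by positivity) (by linarith)) hsq
    nlinarith
  have : ‖u - y‖ ^ 2 ≤ ‖u - x‖ ^ 2 := by linarith
  have h0 : (0:ℝ) ≤ ‖u - x‖ := norm_nonneg _
  nlinarith [norm_nonneg (u - y)]
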